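/- For d ≥ 3 and D ∈ {2,3}, every nonzero vector in the null space of the tomography matrix A_d^D has at least 2^D nonzero entries and at least 2^{D−1} negative entries, and both bounds are attained; consequently the Kruskal rank of A_d^D equals 2^D − 1. -/

import Mathlib

open Matrix Kronecker

/-- The matrix `M = [−1ᵀ_{d−1}; I_{d−1}] ∈ ℝ^{d×(d−1)}`. -/
def Mmat (d : ℕ) : Matrix (Fin d) (Fin (d - 1)) ℝ :=
  Matrix.of fun i j => if (i : ℕ) = 0 then -1 else if (i : ℕ) = (j : ℕ) + 1 then 1 else 0

/-- The all-ones row vector `1_dᵀ ∈ ℝ^{1×d}`. -/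
def onesRow (d : ℕ) : Matrix (Fin 1) (Fin d) ℝ := Matrix.of fun _ _ => 1

/-- 2D tomography matrix `A_d^2 = [I_d ⊗ 1_dᵀ ; 1_dᵀ ⊗ I_d]`. -/
def A2 (d : ℕ) : Matrix ((Fin d × Fin 1) ⊕ (Fin 1 × Fin d)) (Fin d × Fin d) ℝ :=
  Matrix.fromRows ((1 : Matrix (Fin d) (Fin d) ℝ) ⊗ₖ onesRow d)
    (onesRow d ⊗ₖ (1 : Matrix (Fin d) (Fin d) ℝ))

/-- 3D tomography matrix `A_d^3 = [1ᵀ⊗I⊗I ; I⊗1ᵀ⊗I ; I⊗I⊗1ᵀ]`. -/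
def A3 (d : ℕ) :
    Matrix (((Fin 1 × Fin d) × Fin d) ⊕ (((Fin d × Fin 1) × Fin d) ⊕ ((Fin d × Fin d) × Fin 1)))
      ((Fin d × Fin d) × Fin d) ℝ :=
  Matrix.fromRows ((onesRow d ⊗ₖ (1 : Matrix (Fin d) (Fin d) ℝ)) ⊗ₖ (1 : Matrix (Fin d) (Fin d) ℝ))
    (Matrix.fromRows
      (((1 : Matrix (Fin d) (Fin d) ℝ) ⊗ₖ onesRow d) ⊗ₖ (1 : Matrix (Fin d) (Fin d) ℝ))
      (((1 : Matrix (Fin d) (Fin d) ℝ) ⊗ₖ (1 : Matrix (Fin d) (Fin d) ℝ)) ⊗ₖ onesRow d))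

/-- `B_d^2 = M ⊗ M`. -/
def B2 (d : ℕ) : Matrix (Fin d × Fin d) (Fin (d - 1) × Fin (d - 1)) ℝ :=
  Mmat d ⊗ₖ Mmat d

/-- `B_d^3 = M ⊗ M ⊗ M`. -/
def B3 (d : ℕ) :
    Matrix ((Fin d × Fin d) × Fin d) ((Fin (d - 1) × Fin (d - 1)) × Fin (d - 1)) ℝ :=
  (Mmat d ⊗ₖ Mmat d) ⊗ₖ Mmat d

/-- Every set of `r` columns of `A` is linearly independent. -/
def colsIndep {α β : Type*} [Fintype α] [Fintype β] [DecidableEq β]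
    (A : Matrix α β ℝ) (r : ℕ) : Prop :=
  ∀ T : Finset β, T.card = r → LinearIndependent ℝ (fun j : T => (Aᵀ (j : β)))


section Stmt11Aux
open Finset


lemma exists_pos_of_sum_zero {n : ℕ} {f : Fin n → ℝ} (hs : ∑ i, f i = 0)
    (hf : ∃ i, f i ≠ 0) : ∃ j, 0 < f j := by
  by_contra h
  push_neg at h
  obtain ⟨i, hi⟩ := hf
  have hlt := Finset.sum_lt_sum (g := fun _ : Fin n => (0:ℝ)) (fun j _ => h j)
    ⟨i, Finset.mem_univ i, lt_of_le_of_ne (h i) hi⟩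
  simp [hs] at hlt

lemma exists_neg_of_sum_zero {n : ℕ} {f : Fin n → ℝ} (hs : ∑ i, f i = 0)
    (hf : ∃ i, f i ≠ 0) : ∃ j, f j < 0 := by
  obtain ⟨j, hj⟩ := exists_pos_of_sum_zero (f := fun i => -f i)
    (by simpa using hs) (by obtain ⟨i, hi⟩ := hf; exact ⟨i, by simpa using hi⟩)
  exact ⟨j, by linarith⟩

lemma card_add_le {α : Type*} [DecidableEq α] {S T F : Finset α}
    (hS : S ⊆ F) (hT : T ⊆ F) (h : Disjoint S T) : S.card + T.card ≤ F.card := by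
  rw [← Finset.card_union_of_disjoint h]
  exact Finset.card_le_card (Finset.union_subset hS hT)

/-- 2D core bound. -/
lemma matrix4 {d : ℕ} (w : Fin d × Fin d → ℝ)
    (hrow : ∀ i, ∑ k, w (i, k) = 0) (hcol : ∀ k, ∑ i, w (i, k) = 0) (hw : w ≠ 0) :
    4 ≤ (Finset.univ.filter (fun p => w p ≠ 0)).card ∧
      2 ≤ (Finset.univ.filter (fun p => w p < 0)).card := by
  classical
  obtain ⟨p, hp⟩ := Function.ne_iff.mp hw
  simp only [Pi.zero_apply] at hp
  obtain ⟨k0, hk0⟩ := exists_pos_of_sum_zero (hrow p.1) ⟨p.2, hp⟩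
  obtain ⟨i2, hi2⟩ := exists_neg_of_sum_zero (hcol k0) ⟨p.1, ne_of_gt hk0⟩
  have hne : p.1 ≠ i2 := by
    intro h; rw [h] at hk0; linarith
  -- per-row contribution
  have key : ∀ i : Fin d, (∃ k, w (i, k) ≠ 0) →
      2 ≤ (Finset.univ.filter (fun q : Fin d × Fin d => q.1 = i ∧ w q ≠ 0)).card ∧
      1 ≤ (Finset.univ.filter (fun q : Fin d × Fin d => q.1 = i ∧ w q < 0)).card := by
    intro i hi
    obtain ⟨ka, hka⟩ := exists_pos_of_sum_zero (hrow i) hi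
    obtain ⟨kb, hkb⟩ := exists_neg_of_sum_zero (hrow i) hi
    have hab : ka ≠ kb := by intro h; rw [h] at hka; linarith
    constructor
    · rw [show (2:ℕ) = 1 + 1 from rfl]
      apply Finset.one_lt_card.mpr
      refine ⟨(i, ka), by simp [ne_of_gt hka], (i, kb), by simp [ne_of_lt hkb], by simp [hab]⟩
    · exact Finset.card_pos.mpr ⟨(i, kb), by simp [hkb]⟩
  obtain ⟨h1a, h1b⟩ := key p.1 ⟨p.2, hp⟩
  obtain ⟨h2a, h2b⟩ := key i2 ⟨k0, ne_of_lt hi2⟩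
  constructor
  · have := card_add_le (S := Finset.univ.filter (fun q : Fin d × Fin d => q.1 = p.1 ∧ w q ≠ 0))
      (T := Finset.univ.filter (fun q : Fin d × Fin d => q.1 = i2 ∧ w q ≠ 0))
      (F := Finset.univ.filter (fun q : Fin d × Fin d => w q ≠ 0))
      (by intro q hq; simp at hq ⊢; exact hq.2) (by intro q hq; simp at hq ⊢; exact hq.2)
      (by rw [Finset.disjoint_left]; intro q hq hq'; simp at hq hq'; exact hne (hq.1 ▸ hq'.1.symm ▸ rfl))
    omega
  · have := card_add_le (S := Finset.univ.filter (fun q : Fin d × Fin d => q.1 = p.1 ∧ w q < 0))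
      (T := Finset.univ.filter (fun q : Fin d × Fin d => q.1 = i2 ∧ w q < 0))
      (F := Finset.univ.filter (fun q : Fin d × Fin d => w q < 0))
      (by intro q hq; simp at hq ⊢; exact hq.2) (by intro q hq; simp at hq ⊢; exact hq.2)
      (by rw [Finset.disjoint_left]; intro q hq hq'; simp at hq hq'; exact hne (hq.1 ▸ hq'.1.symm ▸ rfl))
    omega

/-- 3D core bound. -/
lemma tensor8 {d : ℕ} (w : (Fin d × Fin d) × Fin d → ℝ)
    (h1 : ∀ j k, ∑ i, w ((i, j), k) = 0) (h2 : ∀ i k, ∑ j, w ((i, j), k) = 0)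
    (h3 : ∀ i j, ∑ k, w ((i, j), k) = 0) (hw : w ≠ 0) :
    8 ≤ (Finset.univ.filter (fun q => w q ≠ 0)).card ∧
      4 ≤ (Finset.univ.filter (fun q => w q < 0)).card := by
  classical
  obtain ⟨q, hq⟩ := Function.ne_iff.mp hw
  simp only [Pi.zero_apply] at hq
  obtain ⟨⟨i0, j0⟩, k'⟩ := q
  obtain ⟨ka, hka⟩ := exists_pos_of_sum_zero (h3 i0 j0) ⟨k', hq⟩
  obtain ⟨kb, hkb⟩ := exists_neg_of_sum_zero (h3 i0 j0) ⟨k', hq⟩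
  have hab : ka ≠ kb := by intro h; rw [h] at hka; linarith
  -- per-slice contribution
  have key : ∀ k : Fin d, (∃ p, w (p, k) ≠ 0) →
      4 ≤ (Finset.univ.filter (fun q : (Fin d × Fin d) × Fin d => q.2 = k ∧ w q ≠ 0)).card ∧
      2 ≤ (Finset.univ.filter (fun q : (Fin d × Fin d) × Fin d => q.2 = k ∧ w q < 0)).card := by
    intro k hk
    have hw' : (fun p : Fin d × Fin d => w (p, k)) ≠ 0 := by
      obtain ⟨p, hp⟩ := hk
      exact Function.ne_iff.mpr ⟨p, by simpa using hp⟩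
    obtain ⟨h4, h2'⟩ := matrix4 (fun p => w (p, k)) (fun i => h2 i k) (fun j => h1 j k) hw'
    have himg : ∀ P : ℝ → Prop, ∀ inst : DecidablePred (fun x : ℝ => P x),
        (Finset.univ.filter (fun q : (Fin d × Fin d) × Fin d => q.2 = k ∧ P (w q)))
          = (Finset.univ.filter (fun p : Fin d × Fin d => P (w (p, k)))).image (fun p => (p, k)) := by
      intro P inst
      ext ⟨p, k2⟩
      simp only [Finset.mem_filter, Finset.mem_univ, true_and, Finset.mem_image]
      constructor
      · rintro ⟨rfl, h⟩; exact ⟨p, h, rfl⟩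
      · rintro ⟨p', h, heq⟩
        obtain ⟨rfl, rfl⟩ : p' = p ∧ k = k2 := by
          constructor <;> [exact congrArg Prod.fst heq; exact congrArg Prod.snd heq]
        exact ⟨rfl, h⟩
    have hinj : Function.Injective (fun p : Fin d × Fin d => (p, k)) := by
      intro a b h; exact congrArg Prod.fst h
    constructor
    · rw [himg (fun x => x ≠ 0) _, Finset.card_image_of_injective _ hinj]; exact h4
    · rw [himg (fun x => x < 0) _, Finset.card_image_of_injective _ hinj]; exact h2'
  obtain ⟨ha4, ha2⟩ := key ka ⟨(i0, j0), ne_of_gt hka⟩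
  obtain ⟨hb4, hb2⟩ := key kb ⟨(i0, j0), ne_of_lt hkb⟩
  constructor
  · have := card_add_le
      (S := Finset.univ.filter (fun q : (Fin d × Fin d) × Fin d => q.2 = ka ∧ w q ≠ 0))
      (T := Finset.univ.filter (fun q : (Fin d × Fin d) × Fin d => q.2 = kb ∧ w q ≠ 0))
      (F := Finset.univ.filter (fun q : (Fin d × Fin d) × Fin d => w q ≠ 0))
      (by intro q hq; simp at hq ⊢; exact hq.2) (by intro q hq; simp at hq ⊢; exact hq.2)
      (by rw [Finset.disjoint_left]; intro q hq hq'; simp at hq hq'; exact hab (hq.1 ▸ hq'.1.symm ▸ rfl))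
    omega
  · have := card_add_le
      (S := Finset.univ.filter (fun q : (Fin d × Fin d) × Fin d => q.2 = ka ∧ w q < 0))
      (T := Finset.univ.filter (fun q : (Fin d × Fin d) × Fin d => q.2 = kb ∧ w q < 0))
      (F := Finset.univ.filter (fun q : (Fin d × Fin d) × Fin d => w q < 0))
      (by intro q hq; simp at hq ⊢; exact hq.2) (by intro q hq; simp at hq ⊢; exact hq.2)
      (by rw [Finset.disjoint_left]; intro q hq hq'; simp at hq hq'; exact hab (hq.1 ▸ hq'.1.symm ▸ rfl))
    omega

lemma A2_mulVec_inl (d : ℕ) (v : Fin d × Fin d → ℝ) (i : Fin d) (z : Fin 1) :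
    (A2 d).mulVec v (Sum.inl (i, z)) = ∑ k, v (i, k) := by
  simp only [A2, Matrix.mulVec, dotProduct, Fintype.sum_prod_type, onesRow,
    Matrix.fromRows_apply_inl, Matrix.fromRows_apply_inr, Matrix.of_apply, Matrix.kroneckerMap_apply, Matrix.one_apply,
    Sum.elim_inl, Sum.elim_inr, ite_mul, one_mul, zero_mul, mul_one, mul_ite, mul_zero]
  try simp [Finset.sum_ite_eq]
  try (rw [Finset.sum_comm]; simp [Finset.sum_ite_eq])

lemma A2_mulVec_inr (d : ℕ) (v : Fin d × Fin d → ℝ) (k : Fin d) (z : Fin 1) :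
    (A2 d).mulVec v (Sum.inr (z, k)) = ∑ i, v (i, k) := by
  simp only [A2, Matrix.mulVec, dotProduct, Fintype.sum_prod_type, onesRow,
    Matrix.fromRows_apply_inl, Matrix.fromRows_apply_inr, Matrix.of_apply, Matrix.kroneckerMap_apply, Matrix.one_apply,
    Sum.elim_inl, Sum.elim_inr, ite_mul, one_mul, zero_mul, mul_one, mul_ite, mul_zero]
  try simp [Finset.sum_ite_eq]
  try (rw [Finset.sum_comm]; simp [Finset.sum_ite_eq])

lemma A3_mulVec_1 (d : ℕ) (v : (Fin d × Fin d) × Fin d → ℝ) (j k : Fin d) (z : Fin 1) :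
    (A3 d).mulVec v (Sum.inl ((z, j), k)) = ∑ i, v ((i, j), k) := by
  simp only [A3, Matrix.mulVec, dotProduct, Fintype.sum_prod_type, onesRow,
    Matrix.fromRows_apply_inl, Matrix.fromRows_apply_inr, Matrix.of_apply, Matrix.kroneckerMap_apply, Matrix.one_apply,
    Sum.elim_inl, Sum.elim_inr, ite_mul, one_mul, zero_mul, mul_one, mul_ite, mul_zero]
  try simp [Finset.sum_ite_eq]
  try (rw [Finset.sum_comm]; simp [Finset.sum_ite_eq])

lemma A3_mulVec_2 (d : ℕ) (v : (Fin d × Fin d) × Fin d → ℝ) (i k : Fin d) (z : Fin 1) :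
    (A3 d).mulVec v (Sum.inr (Sum.inl ((i, z), k))) = ∑ j, v ((i, j), k) := by
  simp only [A3, Matrix.mulVec, dotProduct, Fintype.sum_prod_type, onesRow,
    Matrix.fromRows_apply_inl, Matrix.fromRows_apply_inr, Matrix.of_apply, Matrix.kroneckerMap_apply, Matrix.one_apply,
    Sum.elim_inl, Sum.elim_inr, ite_mul, one_mul, zero_mul, mul_one, mul_ite, mul_zero]
  try simp [Finset.sum_ite_eq]
  try (rw [Finset.sum_comm]; simp [Finset.sum_ite_eq])

lemma A3_mulVec_3 (d : ℕ) (v : (Fin d × Fin d) × Fin d → ℝ) (i j : Fin d) (z : Fin 1) :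
    (A3 d).mulVec v (Sum.inr (Sum.inr ((i, j), z))) = ∑ k, v ((i, j), k) := by
  simp only [A3, Matrix.mulVec, dotProduct, Fintype.sum_prod_type, onesRow,
    Matrix.fromRows_apply_inl, Matrix.fromRows_apply_inr, Matrix.of_apply, Matrix.kroneckerMap_apply, Matrix.one_apply,
    Sum.elim_inl, Sum.elim_inr, ite_mul, one_mul, zero_mul, mul_one, mul_ite, mul_zero]
  try simp [Finset.sum_ite_eq]
  try (rw [Finset.sum_comm]; simp [Finset.sum_ite_eq])

lemma colsIndep_of_spark {α β : Type*} [Fintype α] [Fintype β] [DecidableEq β]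
    (A : Matrix α β ℝ) (m : ℕ)
    (hker : ∀ v : β → ℝ, A.mulVec v = 0 → v ≠ 0 →
      m ≤ (Finset.univ.filter (fun i => v i ≠ 0)).card)
    (r : ℕ) (hr : r < m) : colsIndep A r := by
  classical
  intro T hT
  rw [Fintype.linearIndependent_iff]
  intro g hg
  set v : β → ℝ := fun c => if h : c ∈ T then g ⟨c, h⟩ else 0 with hv
  have hAv : A.mulVec v = 0 := by
    funext a
    have hga := congrFun hg a
    simp only [Finset.sum_apply, Pi.smul_apply, Pi.zero_apply, smul_eq_mul] at hga
    have e1 : A.mulVec v a = ∑ c, A a c * v c := rfl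
    rw [e1, ← Finset.sum_subset (Finset.subset_univ T)
      (fun c _ hc => by simp [hv, hc])]
    rw [← Finset.sum_attach T (fun c => A a c * v c)]
    rw [Pi.zero_apply, ← hga]
    apply Finset.sum_congr rfl
    intro j _
    simp [hv, j.2, Matrix.transpose_apply, mul_comm]
  by_cases hv0 : v = 0
  · intro j
    have : v (j : β) = 0 := by rw [hv0]; rfl
    simpa [hv, j.2] using this
  · exfalso
    have hsupp : (Finset.univ.filter (fun i => v i ≠ 0)) ⊆ T := by
      intro c hc
      simp only [Finset.mem_filter] at hc
      by_contra h
      exact hc.2 (by simp [hv, h])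
    have := (hker v hAv hv0).trans (Finset.card_le_card hsupp)
    omega

lemma not_colsIndep {α β : Type*} [Fintype α] [Fintype β] [DecidableEq β]
    (A : Matrix α β ℝ) (v : β → ℝ) (hv : A.mulVec v = 0) (p0 : β) (hp0 : v p0 ≠ 0)
    (r : ℕ) (hr1 : (Finset.univ.filter (fun i => v i ≠ 0)).card ≤ r)
    (hr2 : r ≤ Fintype.card β) : ¬ colsIndep A r := by
  classical
  obtain ⟨T, hsub, hcard⟩ := Finset.exists_superset_card_eq hr1 (by simpa using hr2)
  intro h
  have li := h T hcard
  rw [Fintype.linearIndependent_iff] at li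
  have hmem : p0 ∈ T := hsub (by simp [hp0])
  refine hp0 (li (fun j => v (j : β)) ?_ ⟨p0, hmem⟩)
  funext a
  simp only [Finset.sum_apply, Pi.smul_apply, Pi.zero_apply, smul_eq_mul,
    Matrix.transpose_apply]
  rw [Finset.sum_coe_sort T (fun c => v c * A a c)]
  rw [Finset.sum_subset (Finset.subset_univ T) (fun c _ hc => by
    have : v c = 0 := by
      by_contra h'
      exact hc (hsub (by simp [h']))
    simp [this])]
  have : A.mulVec v a = 0 := by rw [hv]; rfl
  rw [← this]
  simp [Matrix.mulVec, dotProduct, mul_comm]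


def z0 (d : ℕ) (hd : 3 ≤ d) : Fin d := ⟨0, by omega⟩
def z1 (d : ℕ) (hd : 3 ≤ d) : Fin d := ⟨1, by omega⟩
def uu (d : ℕ) (hd : 3 ≤ d) : Fin d → ℝ :=
  fun i => if i = z0 d hd then 1 else if i = z1 d hd then -1 else 0

lemma z01 {d : ℕ} (hd : 3 ≤ d) : z0 d hd ≠ z1 d hd := by simp [z0, z1, Fin.ext_iff]

lemma uu_z0 {d : ℕ} (hd : 3 ≤ d) : uu d hd (z0 d hd) = 1 := by simp [uu]
lemma uu_z1 {d : ℕ} (hd : 3 ≤ d) : uu d hd (z1 d hd) = -1 := by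
  simp [uu, Ne.symm (z01 hd)]

lemma uu_tri {d : ℕ} (hd : 3 ≤ d) (i : Fin d) :
    (i = z0 d hd ∧ uu d hd i = 1) ∨ (i = z1 d hd ∧ uu d hd i = -1) ∨
      (uu d hd i = 0 ∧ i ≠ z0 d hd ∧ i ≠ z1 d hd) := by
  by_cases h0 : i = z0 d hd
  · exact Or.inl ⟨h0, h0 ▸ uu_z0 hd⟩
  · by_cases h1 : i = z1 d hd
    · exact Or.inr (Or.inl ⟨h1, h1 ▸ uu_z1 hd⟩)
    · exact Or.inr (Or.inr ⟨by simp [uu, h0, h1], h0, h1⟩)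

lemma uu_sum {d : ℕ} (hd : 3 ≤ d) : ∑ i, uu d hd i = 0 := by
  have h : ∀ i : Fin d, uu d hd i =
      (if i = z0 d hd then (1:ℝ) else 0) + (if i = z1 d hd then -1 else 0) := by
    intro i
    by_cases h0 : i = z0 d hd <;> by_cases h1 : i = z1 d hd
    · exact absurd (h0.symm.trans h1) (z01 hd)
    all_goals simp [uu, h0, h1, z01 hd, Ne.symm (z01 hd)]
  simp [h, Finset.sum_add_distrib, Finset.sum_ite_eq']

lemma uu_ne {d : ℕ} (hd : 3 ≤ d) (i : Fin d) :
    uu d hd i ≠ 0 ↔ (i = z0 d hd ∨ i = z1 d hd) := by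
  rcases uu_tri hd i with ⟨h, hv⟩ | ⟨h, hv⟩ | ⟨hv, h0, h1⟩
  · subst h; simp [uu_z0 hd]
  · subst h; simp [uu_z1 hd]
  · simp [hv, h0, h1]

lemma uu_neg {d : ℕ} (hd : 3 ≤ d) (i : Fin d) : uu d hd i < 0 ↔ i = z1 d hd := by
  rcases uu_tri hd i with ⟨h, hv⟩ | ⟨h, hv⟩ | ⟨hv, h0, h1⟩
  · subst h; simp [uu_z0 hd, z01 hd]
  · subst h; simp [uu_z1 hd]
  · simp [hv, h1]

lemma uu_pos {d : ℕ} (hd : 3 ≤ d) (i : Fin d) : 0 < uu d hd i ↔ i = z0 d hd := by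
  rcases uu_tri hd i with ⟨h, hv⟩ | ⟨h, hv⟩ | ⟨hv, h0, h1⟩
  · subst h; simp [uu_z0 hd]
  · subst h; simp [uu_z1 hd, Ne.symm (z01 hd)]
  · simp [hv, h0]

def v2 (d : ℕ) (hd : 3 ≤ d) : Fin d × Fin d → ℝ := fun p => uu d hd p.1 * uu d hd p.2
def v3 (d : ℕ) (hd : 3 ≤ d) : (Fin d × Fin d) × Fin d → ℝ :=
  fun q => uu d hd q.1.1 * uu d hd q.1.2 * uu d hd q.2

lemma v2_ne_zero {d : ℕ} (hd : 3 ≤ d) : v2 d hd ≠ 0 := by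
  intro h
  have := congrFun h (z0 d hd, z0 d hd)
  simp [v2, uu_z0 hd] at this

lemma v2_card_ne {d : ℕ} (hd : 3 ≤ d) :
    (Finset.univ.filter (fun p => v2 d hd p ≠ 0)).card = 4 := by
  have : (Finset.univ.filter (fun p => v2 d hd p ≠ 0)) =
      (({z0 d hd, z1 d hd} : Finset (Fin d)) ×ˢ ({z0 d hd, z1 d hd} : Finset (Fin d))) := by
    ext ⟨a, b⟩
    simp [v2, mul_ne_zero_iff, uu_ne hd, Finset.mem_product]
  rw [this, Finset.card_product, Finset.card_pair (z01 hd)]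

lemma v2_card_neg {d : ℕ} (hd : 3 ≤ d) :
    (Finset.univ.filter (fun p => v2 d hd p < 0)).card = 2 := by
  have : (Finset.univ.filter (fun p => v2 d hd p < 0)) =
      ({(z0 d hd, z1 d hd), (z1 d hd, z0 d hd)} : Finset (Fin d × Fin d)) := by
    ext ⟨a, b⟩
    simp only [Finset.mem_filter, Finset.mem_univ, true_and, v2, mul_neg_iff,
      uu_pos hd, uu_neg hd, Finset.mem_insert, Finset.mem_singleton, Prod.mk.injEq]
    try tauto
  rw [this, Finset.card_pair (by simp [Prod.ext_iff, z01 hd])]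

lemma v3_ne_zero {d : ℕ} (hd : 3 ≤ d) : v3 d hd ≠ 0 := by
  intro h
  have := congrFun h ((z0 d hd, z0 d hd), z0 d hd)
  simp [v3, uu_z0 hd] at this

lemma v3_card_ne {d : ℕ} (hd : 3 ≤ d) :
    (Finset.univ.filter (fun q => v3 d hd q ≠ 0)).card = 8 := by
  have : (Finset.univ.filter (fun q => v3 d hd q ≠ 0)) =
      ((({z0 d hd, z1 d hd} : Finset (Fin d)) ×ˢ ({z0 d hd, z1 d hd} : Finset (Fin d))) ×ˢ
        ({z0 d hd, z1 d hd} : Finset (Fin d))) := by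
    ext ⟨⟨a, b⟩, c⟩
    simp [v3, mul_ne_zero_iff, uu_ne hd, Finset.mem_product]
  rw [this, Finset.card_product, Finset.card_product, Finset.card_pair (z01 hd)]

lemma v3_card_neg {d : ℕ} (hd : 3 ≤ d) :
    (Finset.univ.filter (fun q => v3 d hd q < 0)).card = 4 := by
  have he : (Finset.univ.filter (fun q => v3 d hd q < 0)) =
      ({((z0 d hd, z0 d hd), z1 d hd), ((z0 d hd, z1 d hd), z0 d hd),
        ((z1 d hd, z0 d hd), z0 d hd), ((z1 d hd, z1 d hd), z1 d hd)} :
        Finset ((Fin d × Fin d) × Fin d)) := by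
    ext ⟨⟨a, b⟩, c⟩
    simp only [Finset.mem_filter, Finset.mem_univ, true_and, v3, mul_neg_iff, mul_pos_iff,
      uu_pos hd, uu_neg hd, Finset.mem_insert, Finset.mem_singleton, Prod.mk.injEq]
    constructor
    · rintro (⟨⟨⟨ha, hb⟩ | ⟨ha, hb⟩, hc⟩⟩ | ⟨⟨ha, hb⟩ | ⟨ha, hb⟩, hc⟩)
      · -- 0 < a, 0 < b, c < 0  : a=z0 b=z0 c=z1
        exact Or.inl ⟨⟨ha, hb⟩, hc⟩
      · exact Or.inr (Or.inr (Or.inr ⟨⟨ha, hb⟩, hc⟩))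
      · exact Or.inr (Or.inl ⟨⟨ha, hb⟩, hc⟩)
      · exact Or.inr (Or.inr (Or.inl ⟨⟨ha, hb⟩, hc⟩))
    · have h0 := uu_z0 hd; have h1 := uu_z1 hd
      rintro (⟨⟨rfl, rfl⟩, rfl⟩ | ⟨⟨rfl, rfl⟩, rfl⟩ | ⟨⟨rfl, rfl⟩, rfl⟩ | ⟨⟨rfl, rfl⟩, rfl⟩) <;>
        [exact Or.inl ⟨Or.inl ⟨rfl, rfl⟩, rfl⟩;
         exact Or.inr ⟨Or.inl ⟨rfl, rfl⟩, rfl⟩;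
         exact Or.inr ⟨Or.inr ⟨rfl, rfl⟩, rfl⟩;
         exact Or.inl ⟨Or.inr ⟨rfl, rfl⟩, rfl⟩]
  rw [he]
  have hz := z01 hd
  rw [Finset.card_insert_of_notMem (by simp [Prod.ext_iff, hz, hz.symm]),
    Finset.card_insert_of_notMem (by simp [Prod.ext_iff, hz, hz.symm]),
    Finset.card_insert_of_notMem (by simp [Prod.ext_iff, hz, hz.symm]),
    Finset.card_singleton]


end Stmt11Aux

/-- for `d ≥ 3`, `D ∈ {2,3}`, every nonzero null space vector of
`A_d^D` has at least `2^D` nonzero entries and at least `2^{D-1}` negative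
entries, both bounds are attained, and the Kruskal rank of `A_d^D` is `2^D - 1`. -/
theorem stmt11 (d : ℕ) (hd : 3 ≤ d) :
    ((∀ v : Fin d × Fin d → ℝ, (A2 d).mulVec v = 0 → v ≠ 0 →
        2 ^ 2 ≤ (Finset.univ.filter (fun i => v i ≠ 0)).card ∧
        2 ^ 1 ≤ (Finset.univ.filter (fun i => v i < 0)).card) ∧
      (∃ v : Fin d × Fin d → ℝ, (A2 d).mulVec v = 0 ∧ v ≠ 0 ∧
        (Finset.univ.filter (fun i => v i ≠ 0)).card = 2 ^ 2 ∧
        (Finset.univ.filter (fun i => v i < 0)).card = 2 ^ 1) ∧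
      IsGreatest {r : ℕ | r ≤ d ^ 2 ∧ colsIndep (A2 d) r} (2 ^ 2 - 1)) ∧
    ((∀ v : (Fin d × Fin d) × Fin d → ℝ, (A3 d).mulVec v = 0 → v ≠ 0 →
        2 ^ 3 ≤ (Finset.univ.filter (fun i => v i ≠ 0)).card ∧
        2 ^ 2 ≤ (Finset.univ.filter (fun i => v i < 0)).card) ∧
      (∃ v : (Fin d × Fin d) × Fin d → ℝ, (A3 d).mulVec v = 0 ∧ v ≠ 0 ∧
        (Finset.univ.filter (fun i => v i ≠ 0)).card = 2 ^ 3 ∧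
        (Finset.univ.filter (fun i => v i < 0)).card = 2 ^ 2) ∧
      IsGreatest {r : ℕ | r ≤ d ^ 3 ∧ colsIndep (A3 d) r} (2 ^ 3 - 1)) := by
  classical
  -- kernel characterizations
  have hA2ker : ∀ v : Fin d × Fin d → ℝ, (A2 d).mulVec v = 0 →
      (∀ i, ∑ k, v (i, k) = 0) ∧ (∀ k, ∑ i, v (i, k) = 0) := by
    intro v h
    constructor
    · intro i
      have := congrFun h (Sum.inl (i, 0))
      rwa [A2_mulVec_inl] at this
    · intro k
      have := congrFun h (Sum.inr (0, k))
      rwa [A2_mulVec_inr] at this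
  have hA3ker : ∀ v : (Fin d × Fin d) × Fin d → ℝ, (A3 d).mulVec v = 0 →
      (∀ j k, ∑ i, v ((i, j), k) = 0) ∧ (∀ i k, ∑ j, v ((i, j), k) = 0) ∧
        (∀ i j, ∑ k, v ((i, j), k) = 0) := by
    intro v h
    refine ⟨fun j k => ?_, fun i k => ?_, fun i j => ?_⟩
    · have := congrFun h (Sum.inl ((0, j), k)); rwa [A3_mulVec_1] at this
    · have := congrFun h (Sum.inr (Sum.inl ((i, 0), k))); rwa [A3_mulVec_2] at this
    · have := congrFun h (Sum.inr (Sum.inr ((i, j), 0))); rwa [A3_mulVec_3] at this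
  have hbound2 : ∀ v : Fin d × Fin d → ℝ, (A2 d).mulVec v = 0 → v ≠ 0 →
      4 ≤ (Finset.univ.filter (fun i => v i ≠ 0)).card ∧
        2 ≤ (Finset.univ.filter (fun i => v i < 0)).card := by
    intro v h hv
    obtain ⟨hr, hc⟩ := hA2ker v h
    exact matrix4 v hr hc hv
  have hbound3 : ∀ v : (Fin d × Fin d) × Fin d → ℝ, (A3 d).mulVec v = 0 → v ≠ 0 →
      8 ≤ (Finset.univ.filter (fun i => v i ≠ 0)).card ∧
        4 ≤ (Finset.univ.filter (fun i => v i < 0)).card := by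
    intro v h hv
    obtain ⟨h1, h2, h3⟩ := hA3ker v h
    exact tensor8 v h1 h2 h3 hv
  have hAv2 : (A2 d).mulVec (v2 d hd) = 0 := by
    funext row
    rcases row with ⟨i, z⟩ | ⟨z, k⟩
    · rw [A2_mulVec_inl]
      simp [v2, ← Finset.mul_sum, uu_sum hd]
    · rw [A2_mulVec_inr]
      simp [v2, ← Finset.sum_mul, uu_sum hd]
  have hAv3 : (A3 d).mulVec (v3 d hd) = 0 := by
    funext row
    rcases row with ⟨⟨z, j⟩, k⟩ | ⟨⟨i, z⟩, k⟩ | ⟨⟨i, j⟩, z⟩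
    · rw [A3_mulVec_1]
      simp [v3, ← Finset.sum_mul, uu_sum hd]
    · rw [A3_mulVec_2]
      have : ∀ jj, uu d hd i * uu d hd jj * uu d hd k
          = (uu d hd i * uu d hd k) * uu d hd jj := fun jj => by ring
      simp only [v3, this, ← Finset.mul_sum, uu_sum hd, mul_zero]
      rfl
    · rw [A3_mulVec_3]
      simp [v3, ← Finset.mul_sum, uu_sum hd]
  have hcard2 : Fintype.card (Fin d × Fin d) = d ^ 2 := by
    simp [pow_two]
  have hcard3 : Fintype.card ((Fin d × Fin d) × Fin d) = d ^ 3 := by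
    simp only [Fintype.card_prod, Fintype.card_fin]; ring
  have hd2 : 9 ≤ d ^ 2 := by nlinarith
  have hd3 : 27 ≤ d ^ 3 := by nlinarith [pow_pos (show 0 < d by omega) 3]
  refine ⟨⟨?_, ?_, ?_, ?_⟩, ?_, ?_, ?_, ?_⟩
  · intro v h hv
    have := hbound2 v h hv
    constructor <;> [simpa using this.1; simpa using this.2]
  · exact ⟨v2 d hd, hAv2, v2_ne_zero hd, by simpa using v2_card_ne hd,
      by simpa using v2_card_neg hd⟩
  · refine ⟨by norm_num; omega, ?_⟩
    exact colsIndep_of_spark (A2 d) 4 (fun v h hv => (hbound2 v h hv).1) _ (by norm_num)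
  · rintro r ⟨hrd, hci⟩
    by_contra hr
    push_neg at hr
    refine not_colsIndep (A2 d) (v2 d hd) hAv2 (z0 d hd, z0 d hd) ?_ r ?_ ?_ hci
    · simp [v2, uu_z0 hd]
    · rw [v2_card_ne hd]; omega
    · rw [hcard2]; exact hrd
  · intro v h hv
    have := hbound3 v h hv
    constructor <;> [simpa using this.1; simpa using this.2]
  · exact ⟨v3 d hd, hAv3, v3_ne_zero hd, by simpa using v3_card_ne hd,
      by simpa using v3_card_neg hd⟩
  · refine ⟨by norm_num; omega, ?_⟩
    exact colsIndep_of_spark (A3 d) 8 (fun v h hv => (hbound3 v h hv).1) _ (by norm_num)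
  · rintro r ⟨hrd, hci⟩
    by_contra hr
    push_neg at hr
    refine not_colsIndep (A3 d) (v3 d hd) hAv3 ((z0 d hd, z0 d hd), z0 d hd) ?_ r ?_ ?_ hci
    · simp [v3, uu_z0 hd]
    · rw [v3_card_ne hd]; omega
    · rw [hcard3]; exact hrd
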